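/- Let x be a positive irrational real number, let p be a prime with p < x, let n ≥ 1 and 1 ≤ i ≤ p−1 be integers, and let a be a squarefree positive integer divisible by p, all of whose prime factors are less than x, satisfying x/(n−(i−1)/p) < a < x/(n−i/p). Then the number of integers k with 1 ≤ k ≤ p−1 such that {x/a} > {kN_p/a} is exactly p − i. -/

import Mathlib

open scoped Classical
open Finset

noncomputable section

/-- Sum of the Möbius function over positive integers `a` in the open interval `(u, v)`
that are *not* divisible by `p`. -/
def Mp' (p : ℕ) (u v : ℝ) : ℤ :=
  ∑ a ∈ (Finset.Icc 1 ⌈v⌉₊).filter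
      (fun a : ℕ => u < (a : ℝ) ∧ (a : ℝ) < v ∧ ¬ p ∣ a),
    ArithmeticFunction.moebius a

/-- Sum of the Möbius function over positive integers `a` in the open interval `(u, v)`
that *are* divisible by `p`. -/
def Mp (p : ℕ) (u v : ℝ) : ℤ :=
  ∑ a ∈ (Finset.Icc 1 ⌈v⌉₊).filter
      (fun a : ℕ => u < (a : ℝ) ∧ (a : ℝ) < v ∧ p ∣ a),
    ArithmeticFunction.moebius a

/-- `Sx y u v` : the set of positive integers in the open interval `(u, v)` all of whose
prime divisors exceed `y`. -/
def Sx (y u v : ℝ) : Set ℕ :=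
  {a : ℕ | 0 < a ∧ u < (a : ℝ) ∧ (a : ℝ) < v ∧ ∀ q : ℕ, q.Prime → q ∣ a → y < (q : ℝ)}

/-- `Np x p` : the product of all primes `q < x` with `q ≠ p`. -/
def Np (x : ℝ) (p : ℕ) : ℕ :=
  ∏ q ∈ (Finset.range ⌈x⌉₊).filter (fun q : ℕ => q.Prime ∧ (q : ℝ) < x ∧ q ≠ p), q

/-- `Aset x j` : squarefree positive integers with exactly `j` prime factors,
all of them less than `x`. -/
def Aset (x : ℝ) (j : ℕ) : Finset ℕ :=
  (Finset.Icc 1 (⌈x⌉₊ ^ j)).filter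
    (fun a => Squarefree a ∧ a.primeFactors.card = j ∧ ∀ q ∈ a.primeFactors, (q : ℝ) < x)

/-- `Nint a b` : the number of integers in the open interval `(a, b)`. -/
def Nint (a b : ℝ) : ℕ :=
  (Finset.Ioo ⌊a⌋ ⌈b⌉).card

/-- `Rres a b = (b - a) - N(a, b)`. -/
def Rres (a b : ℝ) : ℝ :=
  (b - a) - Nint a b

/-- `piR t` : the number of primes `≤ t`. -/
def piR (t : ℝ) : ℕ :=
  Nat.primeCounting ⌊t⌋₊

theorem stmt_16 (x : ℝ) (hx : 0 < x) (hxirr : Irrational x)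
    (p : ℕ) (hp : p.Prime) (hpx : (p : ℝ) < x)
    (n : ℕ) (hn : 1 ≤ n) (i : ℕ) (hi1 : 1 ≤ i) (hi2 : i ≤ p - 1)
    (a : ℕ) (ha : 0 < a) (hsf : Squarefree a) (hpa : p ∣ a)
    (hfac : ∀ q ∈ a.primeFactors, (q : ℝ) < x)
    (hlow : x / ((n : ℝ) - ((i : ℝ) - 1) / p) < a)
    (hhigh : (a : ℝ) < x / ((n : ℝ) - (i : ℝ) / p)) :
    ((Finset.Icc 1 (p - 1)).filter
        (fun k : ℕ => Int.fract (((k : ℝ) * Np x p) / a) < Int.fract (x / a))).card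
      = p - i := by
  have hp1 : 1 < p := hp.one_lt
  have hip : i ≤ p := le_trans hi2 (Nat.sub_le p 1)
  have hppos : (0:ℝ) < p := by exact_mod_cast hp.pos
  have hapos : (0:ℝ) < a := by exact_mod_cast ha
  -- every prime q < x with q ≠ p divides N
  set N := Np x p with hNdef
  have hqN : ∀ q : ℕ, q.Prime → (q:ℝ) < x → q ≠ p → q ∣ N := by
    intro q hq hqx hqp
    apply Finset.dvd_prod_of_mem
    simp only [Finset.mem_filter, Finset.mem_range]
    exact ⟨Nat.lt_ceil.mpr hqx, hq, hqx, hqp⟩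
  have hNpos : 0 < N :=
    Finset.prod_pos (fun q hq => (Finset.mem_filter.mp hq).2.1.pos)
  have hpN : ¬ p ∣ N := by
    intro h
    obtain ⟨q, hq, hpq⟩ := (Nat.Prime.prime hp).exists_mem_finset_dvd h
    have hq' := Finset.mem_filter.mp hq
    have : p = q := ((Nat.prime_dvd_prime_iff_eq hp hq'.2.1).mp hpq)
    exact hq'.2.2.2 this.symm
  -- a divides p * N
  have haN : a ∣ p * N := by
    rw [← Nat.prod_primeFactors_of_squarefree hsf]
    apply Finset.prod_primes_dvd
    · intro q hq; exact (Nat.prime_of_mem_primeFactors hq).prime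
    · intro q hq
      rcases eq_or_ne q p with rfl | hqp
      · exact Dvd.dvd.mul_right dvd_rfl N
      · exact ((hqN q (Nat.prime_of_mem_primeFactors hq) (hfac q hq) hqp)).mul_left p
  obtain ⟨c, hc⟩ := haN
  have hpc : ¬ p ∣ c := by
    intro hdvd
    obtain ⟨b, hb⟩ := hpa
    apply hpN
    have hbc : N = b * c := by
      have : p * N = p * (b * c) := by rw [hc, hb]; ring
      exact Nat.eq_of_mul_eq_mul_left hp.pos this
    obtain ⟨e, he⟩ := hdvd
    exact ⟨b * e, by rw [hbc, he]; ring⟩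
  have hcop : Nat.Coprime c p := ((Nat.Prime.coprime_iff_not_dvd hp).mpr hpc).symm
  obtain ⟨d, -, hd⟩ := Nat.exists_mul_mod_eq_one_of_coprime hcop hp1
  have hpd : ¬ p ∣ d := by
    intro hdvd
    obtain ⟨e, he⟩ := hdvd
    rw [he, show c * (p * e) = (c * e) * p by ring, Nat.mul_mod_left] at hd
    omega
  -- fract of k*N/a equals (k*c mod p)/p
  have hcast : (p:ℝ) * N = a * c := by exact_mod_cast hc
  have key : ∀ k : ℕ, Int.fract ((k:ℝ) * N / a) = ((k * c % p : ℕ) : ℝ) / p := by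
    intro k
    have h1 : (k:ℝ) * N / a = ((k * c : ℕ) : ℝ) / p := by
      rw [div_eq_div_iff hapos.ne' hppos.ne']
      push_cast
      calc (k:ℝ) * N * p = (k:ℝ) * (p * N) := by ring
        _ = (k:ℝ) * (a * c) := by rw [hcast]
        _ = (k:ℝ) * c * a := by ring
    rw [h1, Int.fract_div_natCast_eq_div_natCast_mod]
  -- bounds on x/a
  have hd1pos : (0:ℝ) < (n : ℝ) - ((i : ℝ) - 1) / p := by
    have h1 : ((i:ℝ) - 1) / p < 1 := by
      rw [div_lt_one hppos]
      have : (i:ℝ) ≤ p := by exact_mod_cast hip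
      linarith
    have : (1:ℝ) ≤ n := by exact_mod_cast hn
    linarith
  have hd2pos : (0:ℝ) < (n : ℝ) - (i : ℝ) / p := by
    have h1 : (i:ℝ) / p < 1 := by
      rw [div_lt_one hppos]
      have h2 : (i:ℝ) ≤ (p:ℝ) - 1 := by
        have : ((i:ℕ):ℝ) ≤ ((p - 1:ℕ):ℝ) := by exact_mod_cast hi2
        rwa [Nat.cast_sub hp1.le, Nat.cast_one] at this
      linarith
    have : (1:ℝ) ≤ n := by exact_mod_cast hn
    linarith
  have hxa1 : x / a < (n : ℝ) - ((i : ℝ) - 1) / p := by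
    rw [div_lt_iff₀ hapos]
    have := (div_lt_iff₀ hd1pos).mp hlow
    linarith [mul_comm ((n : ℝ) - ((i : ℝ) - 1) / p) (a:ℝ)]
  have hxa2 : (n : ℝ) - (i : ℝ) / p < x / a := by
    rw [lt_div_iff₀ hapos]
    have := (lt_div_iff₀ hd2pos).mp hhigh
    linarith [mul_comm ((n : ℝ) - (i : ℝ) / p) (a:ℝ)]
  have hicast : ((p - i : ℕ) : ℝ) = (p:ℝ) - i := by
    rw [Nat.cast_sub hip]
  have hi_le : (i:ℝ) ≤ (p:ℝ) - 1 := by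
    have : ((i:ℕ):ℝ) ≤ ((p - 1:ℕ):ℝ) := by exact_mod_cast hi2
    rwa [Nat.cast_sub hp1.le, Nat.cast_one] at this
  have hi_ge : (1:ℝ) ≤ i := by exact_mod_cast hi1
  -- floor of x/a is n - 1
  have hfloor : ⌊x / a⌋ = (n : ℤ) - 1 := by
    rw [Int.floor_eq_iff]
    constructor
    · push_cast
      have : (i:ℝ)/p ≤ ((p:ℝ)-1)/p := by gcongr
      have h2 : ((p:ℝ)-1)/p < 1 := by rw [div_lt_one hppos]; linarith
      nlinarith [hxa2]
    · push_cast
      have : (0:ℝ) ≤ ((i:ℝ)-1)/p := div_nonneg (by linarith) hppos.le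
      linarith [hxa1]
  have hF : Int.fract (x / a) = x / a - ((n:ℝ) - 1) := by
    rw [Int.fract, hfloor]; push_cast; ring
  set F := Int.fract (x / a) with hFdef
  have hF1 : ((p:ℝ) - i) / p < F := by
    rw [hF]
    have : ((p:ℝ) - i)/p = 1 - (i:ℝ)/p := by field_simp
    rw [this]; linarith [hxa2]
  have hF2 : F < ((p:ℝ) - i + 1) / p := by
    rw [hF]
    have : ((p:ℝ) - i + 1)/p = 1 - ((i:ℝ)-1)/p := by field_simp; ring
    rw [this]; linarith [hxa1]
  -- the counting bijection
  have hinv1 : ∀ m : ℕ, (m * c % p) * d % p = m % p := by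
    intro m
    rw [Nat.mod_mul_mod, mul_assoc, Nat.mul_mod, hd, mul_one, Nat.mod_mod_of_dvd _ dvd_rfl]
  have hinv2 : ∀ m : ℕ, (m * d % p) * c % p = m % p := by
    intro m
    rw [Nat.mod_mul_mod, mul_assoc, mul_comm (d:ℕ) c, Nat.mul_mod, hd, mul_one,
      Nat.mod_mod_of_dvd _ dvd_rfl]
  have hcard : (Finset.Icc 1 (p - i)).card = p - i := by rw [Nat.card_Icc]; omega
  rw [← hcard]
  apply Finset.card_nbij' (fun k => k * c % p) (fun r => r * d % p)
  · intro k hk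
    obtain ⟨hk1, hk2⟩ := Finset.mem_filter.mp hk
    obtain ⟨hk1a, hk1b⟩ := Finset.mem_Icc.mp hk1
    rw [key k] at hk2
    have hne : k * c % p ≠ 0 := by
      intro h0
      have : p ∣ k * c := Nat.dvd_of_mod_eq_zero h0
      rcases (Nat.Prime.dvd_mul hp).mp this with h | h
      · have := Nat.le_of_dvd (by omega) h; omega
      · exact hpc h
    have hle : k * c % p ≤ p - i := by
      by_contra hlt
      push_neg at hlt
      have : (p:ℝ) - i + 1 ≤ (k * c % p : ℕ) := by
        rw [← hicast]; exact_mod_cast hlt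
      have : ((p:ℝ) - i + 1) / p ≤ ((k * c % p : ℕ):ℝ)/p := by gcongr
      linarith [hk2, hF2]
    exact Finset.mem_Icc.mpr ⟨Nat.one_le_iff_ne_zero.mpr hne, hle⟩
  · intro r hr
    obtain ⟨hr1, hr2⟩ := Finset.mem_Icc.mp hr
    have hrp : r < p := by omega
    have hne : r * d % p ≠ 0 := by
      intro h0
      have : p ∣ r * d := Nat.dvd_of_mod_eq_zero h0
      rcases (Nat.Prime.dvd_mul hp).mp this with h | h
      · have := Nat.le_of_dvd (by omega) h; omega
      · exact hpd h
    refine Finset.mem_filter.mpr ⟨Finset.mem_Icc.mpr ⟨Nat.one_le_iff_ne_zero.mpr hne, ?_⟩, ?_⟩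
    · have := Nat.mod_lt (r * d) hp.pos; dsimp only; omega
    · rw [key]
      have heq : (r * d % p) * c % p = r := by rw [hinv2, Nat.mod_eq_of_lt hrp]
      rw [heq]
      have : (r:ℝ) ≤ (p:ℝ) - i := by rw [← hicast]; exact_mod_cast hr2
      have h1 : (r:ℝ)/p ≤ ((p:ℝ) - i)/p := by gcongr
      linarith [hF1]
  · intro k hk
    obtain ⟨hk1, _⟩ := Finset.mem_filter.mp hk
    obtain ⟨hk1a, hk1b⟩ := Finset.mem_Icc.mp hk1
    dsimp only
    rw [hinv1, Nat.mod_eq_of_lt (by omega)]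
  · intro r hr
    obtain ⟨hr1, hr2⟩ := Finset.mem_Icc.mp hr
    dsimp only
    rw [hinv2, Nat.mod_eq_of_lt (by omega)]

end
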